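/- arXiv:2006.04909 — 4 statements merged into one kernel-verified Lean document; each statement's English description precedes it below -/
import Mathlib

section
/- The product of sines identity: for every real number x and every positive integer n, sin(n·x) = (1/2) · ∏_{j=0}^{n-1} 2·sin(x + jπ/n). -/
open Real Finset Complex

lemma exp_pi_div_two_mul_I' : Complex.exp (↑(Real.pi/2) * Complex.I) = Complex.I := by
  rw [Complex.exp_mul_I]
  push_cast
  rw [Complex.cos_pi_div_two, Complex.sin_pi_div_two, one_mul, zero_add]

lemma key_prod (x : ℂ) (n : ℕ) (hn : 0 < n) :
    ∏ j ∈ Finset.range n, (1 - Complex.exp (2*Real.pi*Complex.I/n) ^ j * Complex.exp (2*Complex.I*x))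
      = 1 - Complex.exp (2*Complex.I*(n*x)) := by
  have hζ : IsPrimitiveRoot (Complex.exp (2*Real.pi*Complex.I/n)) n :=
    Complex.isPrimitiveRoot_exp n hn.ne'
  have e : Complex.exp (2*Complex.I*x) ^ n = Complex.exp (2*Complex.I*(n*x)) := by
    rw [← Complex.exp_nat_mul]; ring_nf
  have h := congrArg (Polynomial.eval (1:ℂ)) (X_pow_sub_C_eq_prod hζ hn e)
  simp only [Polynomial.eval_prod, Polynomial.eval_sub, Polynomial.eval_pow, Polynomial.eval_X,
    Polynomial.eval_mul, Polynomial.eval_C, map_pow, one_pow] at h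
  exact h.symm

lemma two_sin_eq (z : ℂ) : Complex.I * Complex.exp (-(z*Complex.I)) * (1 - Complex.exp (2*z*Complex.I)) = 2 * Complex.sin z := by
  have h : Complex.exp (-(z*Complex.I)) * Complex.exp (2*z*Complex.I) = Complex.exp (z*Complex.I) := by
    rw [← Complex.exp_add]; congr 1; ring
  rw [Complex.sin, neg_mul]
  linear_combination (-Complex.I) * h

lemma prod_sin_complex (x : ℂ) (n : ℕ) (hn : 0 < n) :
    ∏ j ∈ Finset.range n, (2 * Complex.sin (x + j * Real.pi / n)) = 2 * Complex.sin (n * x) := by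
  obtain ⟨m, rfl⟩ : ∃ m, n = m + 1 := ⟨n - 1, (Nat.succ_pred_eq_of_pos hn).symm⟩
  have hn0 : ((m+1:ℕ):ℂ) ≠ 0 := Nat.cast_ne_zero.mpr hn.ne'
  have hfac : ∀ j ∈ Finset.range (m+1), 2 * Complex.sin (x + j * Real.pi / (m+1:ℕ))
      = Complex.I * Complex.exp (-((x + j * Real.pi / (m+1:ℕ))*Complex.I))
        * (1 - Complex.exp (2*Real.pi*Complex.I/(m+1:ℕ)) ^ j * Complex.exp (2*Complex.I*x)) := by
    intro j _
    rw [← two_sin_eq (x + j * Real.pi / (m+1:ℕ))]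
    congr 2
    rw [← Complex.exp_nat_mul, ← Complex.exp_add]
    congr 1
    field_simp
    ring
  rw [Finset.prod_congr rfl hfac, Finset.prod_mul_distrib, Finset.prod_mul_distrib,
    Finset.prod_const, ← Complex.exp_sum, key_prod x (m+1) hn]
  have gauss : (∑ j ∈ Finset.range (m+1), (j:ℂ)) = (m+1) * ((m:ℂ)+1-1)/2 := by
    have h2 := congrArg (Nat.cast : ℕ → ℂ) (Finset.sum_range_id_mul_two (m+1))
    push_cast at h2
    linear_combination h2/2
  have hsum : (∑ j ∈ Finset.range (m+1), -((x + (j:ℂ) * Real.pi / (m+1:ℕ))*Complex.I))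
      = -((((m+1:ℕ)):ℂ)*x*Complex.I) + (m:ℂ) * -((Real.pi/2 : ℝ)*Complex.I) := by
    have h3 : ∀ j ∈ Finset.range (m+1), -((x + (j:ℂ) * Real.pi / (m+1:ℕ))*Complex.I)
        = -(x*Complex.I) + (j:ℂ) * (-((Real.pi:ℂ)/(m+1:ℕ))*Complex.I) := fun j _ => by ring
    rw [Finset.sum_congr rfl h3, Finset.sum_add_distrib, Finset.sum_const, Finset.card_range, ← Finset.sum_mul, gauss]
    push_cast
    have hm0 : ((m:ℂ)+1) ≠ 0 := by push_cast at hn0; exact hn0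
    field_simp
    ring
  rw [hsum, Complex.exp_add, Complex.exp_nat_mul, Finset.card_range]
  have hexp : Complex.exp (-(((Real.pi/2 : ℝ):ℂ) * Complex.I)) = -Complex.I := by
    rw [Complex.exp_neg, exp_pi_div_two_mul_I', Complex.inv_I]
  rw [hexp, ← two_sin_eq (((m+1:ℕ):ℂ) * x)]
  have hpow : Complex.I ^ (m+1) * (-Complex.I)^m = Complex.I := by
    rw [pow_succ, mul_comm (Complex.I^m) Complex.I, mul_assoc, ← mul_pow]
    norm_num
  have harg : Complex.exp (2*Complex.I*(((m+1:ℕ):ℂ)*x)) = Complex.exp (2*(((m+1:ℕ):ℂ)*x)*Complex.I) := by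
    ring_nf
  have harg2 : Complex.exp (-(((m+1:ℕ):ℂ)*x*Complex.I)) = Complex.exp (-((((m+1:ℕ):ℂ)*x)*Complex.I)) := by
    ring_nf
  rw [harg, harg2]
  linear_combination (Complex.exp (-((((m+1:ℕ):ℂ)*x)*Complex.I)) * (1 - Complex.exp (2*(((m+1:ℕ):ℂ)*x)*Complex.I))) * hpow

theorem sin_mul_eq_half_prod (x : ℝ) (n : ℕ) (hn : 0 < n) :
    Real.sin (n * x) =
      (1 / 2) * ∏ j ∈ Finset.range n, 2 * Real.sin (x + j * Real.pi / n) := by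
  have h := prod_sin_complex (x:ℂ) n hn
  apply Complex.ofReal_injective
  push_cast [Complex.ofReal_sin]
  linear_combination -h / 2
end

section
/- For every positive integer n ≥ 2, ∏_{j=1}^{n-1} Γ(j/n) = (2π)^{(n-1)/2}/√n. -/
open Real Finset Polynomial

lemma aux_prod_one_sub (n : ℕ) (hn : 2 ≤ n) (ζ : ℂ) (hζ : IsPrimitiveRoot ζ n) :
    ∏ j ∈ Finset.Ico 1 n, ((1 : ℂ) - ζ ^ j) = n := by
  have hpos : 0 < n := by omega
  have : NeZero n := ⟨by omega⟩
  have h1 : (X : ℂ[X]) ^ n - 1 = ∏ z ∈ nthRootsFinset n (1 : ℂ), (X - C z) :=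
    X_pow_sub_one_eq_prod hpos hζ
  have h2 : ∏ z ∈ nthRootsFinset n (1 : ℂ), (X - C z) = ∏ j ∈ range n, (X - C (ζ ^ j)) := by
    refine (Finset.prod_nbij (fun j => ζ ^ j) ?_ ?_ ?_ ?_).symm
    · intro j hj
      refine (Polynomial.mem_nthRootsFinset hpos (1 : ℂ)).2 ?_
      rw [← pow_mul, mul_comm, pow_mul, hζ.pow_eq_one, one_pow]
    · intro i hi j hj hij
      exact hζ.pow_inj (mem_range.1 hi) (mem_range.1 hj) hij
    · intro z hz
      obtain ⟨i, hi, rfl⟩ := hζ.eq_pow_of_pow_eq_one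
        ((Polynomial.mem_nthRootsFinset hpos (1 : ℂ)).1 hz)
      exact ⟨i, mem_range.2 hi, rfl⟩
    · intros; rfl
  have h3 : ∏ j ∈ range n, ((X : ℂ[X]) - C (ζ ^ j))
      = (X - 1) * ∏ j ∈ Finset.Ico 1 n, (X - C (ζ ^ j)) := by
    rw [Finset.range_eq_Ico, Finset.prod_eq_prod_Ico_succ_bot hpos]
    simp
  have hQ : (∏ j ∈ Finset.Ico 1 n, ((X : ℂ[X]) - C (ζ ^ j)))
      = ∑ k ∈ range n, (X : ℂ[X]) ^ k := by
    have hne : (X - 1 : ℂ[X]) ≠ 0 := X_sub_C_ne_zero 1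
    apply mul_left_cancel₀ hne
    rw [← h3, ← h2, ← h1, ← geom_sum_mul, mul_comm]
  have := congrArg (Polynomial.eval 1) hQ
  simpa [eval_prod] using this

lemma abs_one_sub_exp (x : ℝ) (h0 : 0 ≤ x) (hπ : x ≤ π) :
    ‖1 - Complex.exp (((2 * x : ℝ) : ℂ) * Complex.I)‖ = 2 * Real.sin x := by
  rw [Complex.exp_mul_I, ← Complex.ofReal_cos, ← Complex.ofReal_sin]
  rw [show (1:ℂ) - (↑(Real.cos (2*x)) + ↑(Real.sin (2*x)) * Complex.I)
      = ↑(1 - Real.cos (2*x)) + ↑(-Real.sin (2*x)) * Complex.I by push_cast; ring]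
  rw [Complex.norm_add_mul_I]
  have hsin : 0 ≤ Real.sin x := Real.sin_nonneg_of_nonneg_of_le_pi h0 hπ
  have h1 : (1 - Real.cos (2*x))^2 + (-Real.sin (2*x))^2 = (2 * Real.sin x)^2 := by
    have h2 := Real.sin_sq_add_cos_sq (2*x)
    have h3 := Real.cos_two_mul x
    have h4 := Real.sin_sq_add_cos_sq x
    nlinarith
  rw [h1, Real.sqrt_sq (by positivity)]

lemma aux_sin_prod (n : ℕ) (hn : 2 ≤ n) :
    ∏ j ∈ Finset.Ico 1 n, (2 * Real.sin (π * j / n)) = n := by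
  have hnpos : (0:ℝ) < n := by positivity
  have hζ := Complex.isPrimitiveRoot_exp n (by omega)
  have key := aux_prod_one_sub n hn _ hζ
  have habs := congrArg (‖·‖) key
  rw [norm_prod, Complex.norm_natCast] at habs
  refine Eq.trans (Finset.prod_congr rfl fun j hj => ?_) habs
  rw [Finset.mem_Ico] at hj
  have hθ : Complex.exp (2 * ↑π * Complex.I / ↑n) ^ j
      = Complex.exp (((2 * (π * j / n) : ℝ) : ℂ) * Complex.I) := by
    rw [← Complex.exp_nat_mul]
    push_cast
    ring_nf
  rw [hθ, abs_one_sub_exp _ (by positivity)]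
  rw [div_le_iff₀ hnpos]
  have : (j:ℝ) ≤ n := by exact_mod_cast hj.2.le
  nlinarith [Real.pi_pos]

theorem prod_gamma_rationals (n : ℕ) (hn : 2 ≤ n) :
    (∏ j ∈ Finset.Icc 1 (n - 1), Real.Gamma (j / n)) =
      (2 * Real.pi) ^ (((n : ℝ) - 1) / 2) / Real.sqrt n := by
  have hnpos : (0:ℝ) < n := by positivity
  have hIcc : Finset.Icc 1 (n - 1) = Finset.Ico 1 n := by
    rw [← Finset.Ico_add_one_right_eq_Icc]
    congr 1
    omega
  rw [hIcc]
  set P : ℝ := ∏ j ∈ Finset.Ico 1 n, Real.Gamma (j / n) with hPdef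
  set R : ℝ := (2 * Real.pi) ^ (((n : ℝ) - 1) / 2) / Real.sqrt n with hRdef
  have hPpos : 0 < P := by
    refine Finset.prod_pos fun j hj => ?_
    rw [Finset.mem_Ico] at hj
    refine Real.Gamma_pos_of_pos (div_pos ?_ hnpos)
    exact_mod_cast hj.1
  have hRpos : 0 < R := by
    apply div_pos (Real.rpow_pos_of_pos (by positivity) _) (Real.sqrt_pos.2 hnpos)
  have hsinprod : ∏ j ∈ Finset.Ico 1 n, Real.sin (π * j / n) = n / 2 ^ (n - 1) := by
    have h := aux_sin_prod n hn
    rw [Finset.prod_mul_distrib, Finset.prod_const, Nat.card_Ico] at h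
    have h2 : (0:ℝ) < 2 ^ (n - 1) := by positivity
    field_simp at h ⊢
    linarith
  have hrefl : P = ∏ j ∈ Finset.Ico 1 n, Real.Gamma (1 - j / n) := by
    rw [hPdef]
    refine Finset.prod_nbij' (fun j => n - j) (fun j => n - j) ?_ ?_ ?_ ?_ ?_
    · intro j hj; simp only [Finset.mem_Ico] at hj ⊢; omega
    · intro j hj; simp only [Finset.mem_Ico] at hj ⊢; omega
    · intro j hj; simp only [Finset.mem_Ico] at hj ⊢; omega
    · intro j hj; simp only [Finset.mem_Ico] at hj ⊢; omega
    · intro j hj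
      rw [Finset.mem_Ico] at hj
      congr 1
      rw [Nat.cast_sub (by omega)]
      field_simp
      ring
  have hP2 : P ^ 2 = (2 * π) ^ (n - 1) / n := by
    have step : P ^ 2 = ∏ j ∈ Finset.Ico 1 n, (π / Real.sin (π * (j / n))) := by
      rw [sq]
      nth_rewrite 2 [hrefl]
      rw [← Finset.prod_mul_distrib]
      exact Finset.prod_congr rfl fun j hj => Real.Gamma_mul_Gamma_one_sub _
    rw [step, Finset.prod_div_distrib, Finset.prod_const, Nat.card_Ico]
    have : ∏ j ∈ Finset.Ico 1 n, Real.sin (π * (j / n)) = n / 2 ^ (n - 1) := by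
      rw [← hsinprod]
      exact Finset.prod_congr rfl fun j hj => by rw [mul_div_assoc]
    rw [this, mul_pow]
    have h2 : (0:ℝ) < 2 ^ (n - 1) := by positivity
    field_simp
  have hR2 : R ^ 2 = (2 * π) ^ (n - 1) / n := by
    rw [hRdef, div_pow, Real.sq_sqrt hnpos.le]
    congr 1
    rw [← Real.rpow_natCast (2 * π) (n - 1), Nat.cast_sub (by omega : 1 ≤ n), Nat.cast_one]
    rw [sq, ← Real.rpow_add (by positivity)]
    congr 1
    ring
  calc P = Real.sqrt (P ^ 2) := (Real.sqrt_sq hPpos.le).symm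
    _ = Real.sqrt (R ^ 2) := by rw [hP2, hR2]
    _ = R := Real.sqrt_sq hRpos.le
end

section
/- Let (a_n) be the ±1-valued Thue–Morse sequence defined by a_n = (-1)^{s_2(n)} where s_2(n) is the binary digit sum of n (so a_0 = 1, a_1 = -1). For any integers k ≥ 1, b ≥ 1 and any real l with |l| < b, the infinite product ∏_{n=0}^∞ (1 + a_n·l/(k·n + b)) converges to a nonzero limit. -/
open Real Finset Filter

/-- The ±1-valued Thue–Morse sequence: `a n = (-1)^(binary digit sum of n)`. -/
noncomputable def thueMorse (n : ℕ) : ℝ := (-1) ^ (Nat.digits 2 n).sum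

lemma tm_abs (n : ℕ) : |thueMorse n| = 1 := by
  unfold thueMorse
  rw [abs_pow, abs_neg, abs_one, one_pow]

lemma tm_even (n : ℕ) : thueMorse (2 * n) = thueMorse n := by
  rcases Nat.eq_zero_or_pos n with h | h
  · simp [h]
  · unfold thueMorse
    rw [Nat.digits_def' (by norm_num : 1 < 2) (by omega)]
    simp [Nat.mul_div_cancel_left, Nat.mul_mod_right]

lemma tm_odd (n : ℕ) : thueMorse (2 * n + 1) = -thueMorse n := by
  unfold thueMorse
  rw [Nat.digits_def' (by norm_num : 1 < 2) (by omega)]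
  have h1 : (2 * n + 1) % 2 = 1 := by omega
  have h2 : (2 * n + 1) / 2 = n := by omega
  rw [h1, h2]
  simp [pow_succ, pow_add, mul_comm]

lemma log_one_add_sub_le {t : ℝ} (h : |t| < 1) : |Real.log (1 + t) - t| ≤ t ^ 2 / (1 - |t|) := by
  have := Real.abs_log_sub_add_sum_range_le (x := -t) (by rwa [abs_neg]) 1
  simp only [Finset.sum_range_one, pow_one, abs_neg, sub_neg_eq_add] at this
  have key : |(-t) ^ (0+1) / ((0:ℕ) + 1) + Real.log (1 + t)| = |Real.log (1 + t) - t| := by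
    congr 1
    push_cast
    ring
  rw [key] at this
  calc |Real.log (1 + t) - t| ≤ |t| ^ (1+1) / (1 - |t|) := this
    _ = t ^ 2 / (1 - |t|) := by rw [sq_abs]

lemma tendsto_even_odd {f : ℕ → ℝ} {L : ℝ}
    (he : Tendsto (fun n => f (2 * n)) atTop (nhds L))
    (ho : Tendsto (fun n => f (2 * n + 1)) atTop (nhds L)) :
    Tendsto f atTop (nhds L) := by
  rw [Metric.tendsto_atTop] at he ho ⊢
  intro ε hε
  obtain ⟨N1, h1⟩ := he ε hε
  obtain ⟨N2, h2⟩ := ho ε hε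
  refine ⟨2 * (max N1 N2) + 1, fun n hn => ?_⟩
  rcases Nat.even_or_odd n with ⟨m, hm⟩ | ⟨m, hm⟩
  · have hm' : n = 2 * m := by omega
    rw [hm']; exact h1 m (by omega)
  · have hm' : n = 2 * m + 1 := by omega
    rw [hm']; exact h2 m (by omega)

theorem thueMorse_prod_converges (k b : ℕ) (hk : 1 ≤ k) (hb : 1 ≤ b) (l : ℝ)
    (hl : |l| < b) :
    ∃ L : ℝ, L ≠ 0 ∧
      Filter.Tendsto
        (fun N => ∏ n ∈ Finset.range N, (1 + thueMorse n * l / (k * n + b)))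
        Filter.atTop (nhds L) := by
  have hb0 : (0:ℝ) < b := by exact_mod_cast hb
  have hk0 : (0:ℝ) < k := by exact_mod_cast hk
  set x : ℕ → ℝ := fun n => thueMorse n * l / (k * n + b) with hxdef
  have hden : ∀ n : ℕ, (0:ℝ) < k * n + b := fun n => by positivity
  have hdenle : ∀ n : ℕ, (n:ℝ) + 1 ≤ k * n + b := by
    intro n
    have h1 : (1:ℝ) ≤ k := by exact_mod_cast hk
    have h2 : (1:ℝ) ≤ b := by exact_mod_cast hb
    nlinarith [Nat.cast_nonneg (α := ℝ) n]
  have habs : ∀ n : ℕ, |x n| = |l| / (k * n + b) := by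
    intro n
    rw [hxdef]
    rw [abs_div, abs_mul, tm_abs, one_mul, abs_of_pos (hden n)]
  have habs_le : ∀ n : ℕ, |x n| ≤ |l| / (n + 1) := by
    intro n
    rw [habs]
    exact div_le_div_of_nonneg_left (abs_nonneg l) (by positivity) (hdenle n)
  have hd : |l| / b < 1 := (div_lt_one hb0).2 hl
  have habs_d : ∀ n : ℕ, |x n| ≤ |l| / b := by
    intro n
    rw [habs]
    apply div_le_div_of_nonneg_left (abs_nonneg l) hb0
    nlinarith [Nat.cast_nonneg (α := ℝ) n, mul_nonneg hk0.le (Nat.cast_nonneg (α := ℝ) n)]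
  have hlt1 : ∀ n : ℕ, |x n| < 1 := fun n => lt_of_le_of_lt (habs_d n) hd
  have hpos : ∀ n : ℕ, 0 < 1 + x n := by
    intro n
    have := abs_lt.1 (hlt1 n)
    linarith [this.1]
  -- base summable sequence
  have hbase : Summable (fun n : ℕ => 1 / ((n:ℝ) + 1) ^ 2) := by
    have h2 : Summable (fun n : ℕ => 1 / ((n:ℝ)) ^ 2) := by
      simpa using Real.summable_one_div_nat_pow.2 (by norm_num)
    have := (summable_nat_add_iff 1).2 h2
    simpa using this
  -- remainder terms
  set r : ℕ → ℝ := fun n => Real.log (1 + x n) - x n with hrdef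
  have hr_bound : ∀ n : ℕ, |r n| ≤ (|l| ^ 2 / (1 - |l| / b)) * (1 / ((n:ℝ) + 1) ^ 2) := by
    intro n
    have h1 := log_one_add_sub_le (hlt1 n)
    have h2 : x n ^ 2 / (1 - |x n|) ≤ (|l| ^ 2 / (1 - |l| / b)) * (1 / ((n:ℝ) + 1) ^ 2) := by
      have hx2 : x n ^ 2 ≤ (|l| / ((n:ℝ) + 1)) ^ 2 := by
        rw [← sq_abs]
        exact pow_le_pow_left₀ (abs_nonneg _) (habs_le n) 2
      have hden1 : 0 < 1 - |l| / b := by linarith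
      have hden2 : 1 - |l| / b ≤ 1 - |x n| := by linarith [habs_d n]
      calc x n ^ 2 / (1 - |x n|) ≤ (|l| / ((n:ℝ) + 1)) ^ 2 / (1 - |l| / b) := by
            apply div_le_div₀ (by positivity) hx2 hden1 hden2
        _ = (|l| ^ 2 / (1 - |l| / b)) * (1 / ((n:ℝ) + 1) ^ 2) := by
            rw [div_pow]; ring
      
    exact le_trans h1 h2
  have hr_abs_summable : Summable (fun n => |r n|) := by
    apply Summable.of_nonneg_of_le (fun n => abs_nonneg _) hr_bound
    exact (hbase.mul_left _)
  have hr_summable : Summable r := hr_abs_summable.of_abs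
  have hR := hr_summable.hasSum.tendsto_sum_nat
  -- paired linear terms
  set y : ℕ → ℝ := fun m => x (2 * m) + x (2 * m + 1) with hydef
  have hy_bound : ∀ m : ℕ, |y m| ≤ |l| * (1 / ((m:ℝ) + 1) ^ 2) := by
    intro m
    have hA : (0:ℝ) < k * (2 * m : ℕ) + b := hden (2 * m)
    have hB : (0:ℝ) < k * (2 * m + 1 : ℕ) + b := hden (2 * m + 1)
    have hy_eq : y m = thueMorse m * l * (k / ((k * (2 * m : ℕ) + b) * (k * (2 * m + 1 : ℕ) + b))) := by
      rw [hydef]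
      simp only [hxdef]
      rw [tm_even, tm_odd]
      push_cast
      field_simp
      ring
    rw [hy_eq]
    rw [abs_mul, abs_mul, tm_abs, one_mul]
    have hk2 : |(k:ℝ) / ((k * (2 * m : ℕ) + b) * (k * (2 * m + 1 : ℕ) + b))| 
        = (k:ℝ) / ((k * (2 * m : ℕ) + b) * (k * (2 * m + 1 : ℕ) + b)) := by
      rw [abs_of_pos]; positivity
    rw [hk2]
    apply mul_le_mul_of_nonneg_left _ (abs_nonneg l)
    rw [div_le_div_iff₀ (by positivity) (by positivity)]
    have hA' : (m:ℝ) + 1 ≤ k * (2 * m : ℕ) + b := by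
      push_cast
      have h1 : (1:ℝ) ≤ k := by exact_mod_cast hk
      have h2 : (1:ℝ) ≤ b := by exact_mod_cast hb
      nlinarith [Nat.cast_nonneg (α := ℝ) m]
    have hB' : (k:ℝ) * ((m:ℝ) + 1) ≤ k * (2 * m + 1 : ℕ) + b := by
      push_cast
      have h2 : (1:ℝ) ≤ b := by exact_mod_cast hb
      nlinarith [Nat.cast_nonneg (α := ℝ) m, hk0]
    calc (k:ℝ) * ((m:ℝ) + 1) ^ 2 = ((m:ℝ) + 1) * ((k:ℝ) * ((m:ℝ) + 1)) := by ring
      _ ≤ (k * (2 * m : ℕ) + b) * (k * (2 * m + 1 : ℕ) + b) := by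
          apply mul_le_mul hA' hB' (by positivity) (le_trans (by positivity) hA')
      _ = 1 * ((k * (2 * m : ℕ) + b) * (k * (2 * m + 1 : ℕ) + b)) := by ring
  have hy_summable : Summable y := by
    apply Summable.of_abs
    apply Summable.of_nonneg_of_le (fun n => abs_nonneg _) hy_bound
    exact hbase.mul_left _
  have hY := hy_summable.hasSum.tendsto_sum_nat
  set Y := ∑' m, y m
  -- even partial sums
  have heven : ∀ N : ℕ, ∑ n ∈ Finset.range (2 * N), x n = ∑ m ∈ Finset.range N, y m := by
    intro N
    induction N with
    | zero => simp
    | succ N ih =>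
      have h2 : 2 * (N + 1) = (2 * N + 1) + 1 := by ring
      rw [h2, Finset.sum_range_succ, Finset.sum_range_succ, ih, Finset.sum_range_succ]
      rw [hydef]
      ring
  have hx0 : Tendsto x atTop (nhds 0) := by
    apply squeeze_zero_norm habs_le
    have h1 : Tendsto (fun n : ℕ => |l| / ((n:ℝ) + 1)) atTop (nhds 0) := by
      have h := tendsto_one_div_add_atTop_nhds_zero_nat.const_mul |l|
      simpa [div_eq_mul_inv] using h
    exact h1
  have h2N : Tendsto (fun N : ℕ => 2 * N) atTop atTop :=
    tendsto_atTop_atTop_of_monotone (fun a b h => by omega) (fun n => ⟨n, by omega⟩)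
  have hPe : Tendsto (fun N => ∑ n ∈ Finset.range (2 * N), x n) atTop (nhds Y) := by
    simp only [heven]
    exact hY
  have hPo : Tendsto (fun N => ∑ n ∈ Finset.range (2 * N + 1), x n) atTop (nhds Y) := by
    have h1 : ∀ N, ∑ n ∈ Finset.range (2 * N + 1), x n
        = ∑ n ∈ Finset.range (2 * N), x n + x (2 * N) := fun N => Finset.sum_range_succ _ _
    simp only [h1]
    have h2 : Tendsto (fun N : ℕ => x (2 * N)) atTop (nhds 0) := hx0.comp h2N
    simpa using hPe.add h2
  have hP : Tendsto (fun N => ∑ n ∈ Finset.range N, x n) atTop (nhds Y) :=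
    tendsto_even_odd hPe hPo
  -- combine
  have hS : Tendsto (fun N => ∑ n ∈ Finset.range N, Real.log (1 + x n)) atTop
      (nhds ((∑' n, r n) + Y)) := by
    have := hR.add hP
    convert this using 2 with N
    rw [← Finset.sum_add_distrib]
    apply Finset.sum_congr rfl
    intro n _
    rw [hrdef]
    ring
  refine ⟨Real.exp ((∑' n, r n) + Y), Real.exp_ne_zero _, ?_⟩
  have hprod : ∀ N, ∏ n ∈ Finset.range N, (1 + x n)
      = Real.exp (∑ n ∈ Finset.range N, Real.log (1 + x n)) := by
    intro N
    rw [Real.exp_sum]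
    exact Finset.prod_congr rfl fun n _ => (Real.exp_log (hpos n)).symm
  have := (Real.continuous_exp.tendsto _).comp hS
  simp only [Function.comp_def] at this
  convert this using 2 with N
  exact hprod N
end

section
/- Let (a_n) be the Thue–Morse sequence a_n = (-1)^{s_2(n)}. For every positive integer q, define the q-stuttered Thue–Morse sequence T_q(a)_n = a_{⌊n/q⌋}. Then the ratio (∏_{n=0}^∞ (1 + T_{2q}(a)_n/(2n+1))) / (∏_{n=0}^∞ (1 + T_q(a)_n/(2n+1))) equals √2, both infinite products being convergent. -/
open Real Finset Filter

/-- The `q`-stuttered Thue–Morse sequence: `T_q(a)_n = a_{⌊n/q⌋}`. -/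
noncomputable def stutter (q n : ℕ) : ℝ := thueMorse (n / q)

lemma tm_pm (n : ℕ) : thueMorse n = 1 ∨ thueMorse n = -1 := by
  unfold thueMorse; rcases Nat.even_or_odd (Nat.digits 2 n).sum with h | h
  · left; exact h.neg_one_pow
  · right; exact h.neg_one_pow

lemma tm_zero : thueMorse 0 = 1 := by simp [thueMorse]

lemma tm_two_mul (k : ℕ) : thueMorse (2 * k) = thueMorse k := by
  rcases Nat.eq_zero_or_pos k with rfl | hk
  · simp
  · unfold thueMorse
    rw [Nat.digits_def' (by norm_num : 1 < 2) (by omega : 0 < 2 * k)]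
    simp [Nat.mul_div_cancel_left _ (by norm_num : 0 < 2), Nat.mul_mod_right]

lemma tm_two_mul_add_one (k : ℕ) : thueMorse (2 * k + 1) = -thueMorse k := by
  unfold thueMorse
  rw [Nat.digits_def' (by norm_num : 1 < 2) (by omega : 0 < 2 * k + 1)]
  have h1 : (2 * k + 1) % 2 = 1 := by omega
  have h2 : (2 * k + 1) / 2 = k := by omega
  rw [h1, h2]
  simp [pow_succ, pow_add, mul_comm]

lemma st_pm (q n : ℕ) : stutter q n = 1 ∨ stutter q n = -1 := tm_pm _

lemma st_lo {q k j : ℕ} (hq : 1 ≤ q) (hj : j < q) :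
    stutter q (2 * q * k + j) = thueMorse k := by
  unfold stutter
  have : (2 * q * k + j) / q = 2 * k := by
    rw [show 2 * q * k + j = j + q * (2 * k) by ring, Nat.add_mul_div_left _ _ (by omega)]
    rw [Nat.div_eq_of_lt hj]; omega
  rw [this, tm_two_mul]

lemma st_hi {q k j : ℕ} (hq : 1 ≤ q) (hj : j < q) :
    stutter q (2 * q * k + q + j) = -thueMorse k := by
  unfold stutter
  have : (2 * q * k + q + j) / q = 2 * k + 1 := by
    rw [show 2 * q * k + q + j = j + q * (2 * k + 1) by ring,
      Nat.add_mul_div_left _ _ (by omega)]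
    rw [Nat.div_eq_of_lt hj]; omega
  rw [this, tm_two_mul_add_one]

lemma abs_log_le {u : ℝ} (h : |u| ≤ 1 / 2) : |Real.log (1 + u)| ≤ 2 * |u| := by
  have h1 : |(-u)| < 1 := by rw [abs_neg]; linarith
  have := Real.abs_log_sub_add_sum_range_le h1 0
  simp only [Finset.range_zero, Finset.sum_empty, zero_add, pow_one, abs_neg,
    sub_neg_eq_add] at this
  have h2 : (1 : ℝ) - |u| ≥ 1 / 2 := by linarith
  calc |Real.log (1 + u)| ≤ |u| / (1 - |u|) := this
    _ ≤ |u| / (1 / 2) := by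
        apply div_le_div_of_nonneg_left (abs_nonneg u) (by norm_num) h2
    _ = 2 * |u| := by ring

noncomputable def fq (q n : ℕ) : ℝ := Real.log (1 + stutter q n / (2 * n + 1))

lemma st_zero (q : ℕ) : stutter q 0 = 1 := by
  unfold stutter; rw [Nat.zero_div]; exact tm_zero

lemma st_abs (q n : ℕ) : |stutter q n| = 1 := by
  rcases st_pm q n with h | h <;> rw [h] <;> norm_num

lemma Fpos (q : ℕ) (n : ℕ) : 0 < 1 + stutter q n / (2 * (n : ℝ) + 1) := by
  rcases Nat.eq_zero_or_pos n with rfl | hn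
  · rw [st_zero]; norm_num
  · have h3 : (3 : ℝ) ≤ 2 * (n : ℝ) + 1 := by
      have : (1:ℝ) ≤ (n:ℝ) := by exact_mod_cast hn
      linarith
    have habs : |stutter q n / (2 * (n : ℝ) + 1)| ≤ 1/3 := by
      rw [abs_div, st_abs, abs_of_pos (by linarith : (0:ℝ) < 2*(n:ℝ)+1)]
      rw [div_le_div_iff₀ (by linarith) (by norm_num)]; linarith
    have := abs_le.1 habs
    linarith [this.1]

lemma absfq (q : ℕ) {n : ℕ} (hn : 1 ≤ n) : |fq q n| ≤ 2 / (2 * (n : ℝ) + 1) := by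
  have h3 : (3 : ℝ) ≤ 2 * (n : ℝ) + 1 := by
    have : (1:ℝ) ≤ (n:ℝ) := by exact_mod_cast hn
    linarith
  have habs : |stutter q n / (2 * (n : ℝ) + 1)| = 1 / (2 * (n:ℝ) + 1) := by
    rw [abs_div, st_abs, abs_of_pos (by linarith : (0:ℝ) < 2*(n:ℝ)+1)]
  have h12 : |stutter q n / (2 * (n : ℝ) + 1)| ≤ 1/2 := by
    rw [habs, div_le_div_iff₀ (by linarith) (by norm_num)]; linarith
  calc |fq q n| ≤ 2 * |stutter q n / (2 * (n : ℝ) + 1)| := abs_log_le h12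
    _ = 2 / (2 * (n:ℝ) + 1) := by rw [habs]; ring

lemma absfq' (q : ℕ) (n : ℕ) : |fq q n| ≤ 1 := by
  rcases Nat.eq_zero_or_pos n with rfl | hn
  · unfold fq
    rw [st_zero]
    norm_num
    rw [abs_of_pos (Real.log_pos (by norm_num))]
    calc Real.log 2 ≤ 2 - 1 := Real.log_le_sub_one_of_pos (by norm_num)
      _ = 1 := by norm_num
  · have := absfq q hn
    have h3 : (3 : ℝ) ≤ 2 * (n : ℝ) + 1 := by
      have : (1:ℝ) ≤ (n:ℝ) := by exact_mod_cast hn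
      linarith
    have : 2 / (2 * (n:ℝ) + 1) ≤ 1 := by
      rw [div_le_one (by linarith)]; linarith
    linarith [absfq q hn]


lemma pair_core {a K J s : ℝ} (ha : 1 ≤ a) (hK : 1 ≤ K) (hJ : 0 ≤ J)
    (hs : s = 1 ∨ s = -1) :
    |Real.log (1 + s / (4 * a * K + 2 * J + 1)) +
      Real.log (1 + -s / (4 * a * K + 2 * a + 2 * J + 1))| ≤ 3 / (8 * a * K ^ 2) := by
  obtain ⟨x, hx⟩ : ∃ x : ℝ, x = 4 * a * K + 2 * J + 1 := ⟨_, rfl⟩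
  obtain ⟨y, hy⟩ : ∃ y : ℝ, y = 4 * a * K + 2 * a + 2 * J + 1 := ⟨_, rfl⟩
  rw [← hx, ← hy]
  have haK : 1 ≤ a * K := by nlinarith
  have hxlb : 4 * a * K ≤ x := by rw [hx]; linarith
  have hylb : 4 * a * K ≤ y := by rw [hy]; linarith
  have hx4 : 4 ≤ x := by nlinarith
  have hy4 : 4 ≤ y := by nlinarith
  have hxpos : (0:ℝ) < x := by linarith
  have hypos : (0:ℝ) < y := by linarith
  have hyx : y = x + 2 * a := by rw [hx, hy]; ring
  have h1x : (1:ℝ)/x < 1 := by rw [div_lt_one hxpos]; linarith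
  have h1y : (1:ℝ)/y < 1 := by rw [div_lt_one hypos]; linarith
  have hP1 : 0 < 1 + s / x := by
    rcases hs with h | h <;> rw [h]
    · positivity
    · rw [neg_div]; linarith
  have hP2 : 0 < 1 + -s / y := by
    rcases hs with h | h <;> rw [h]
    · rw [neg_div]; linarith
    · norm_num; positivity
  have hprod : (1 + s / x) * (1 + -s / y) = 1 + (2 * a * s - 1) / (x * y) := by
    rcases hs with h | h <;> rw [h, hyx] <;> field_simp <;> ring
  have habsu : |(2 * a * s - 1) / (x * y)| ≤ 3 / (16 * a * K ^ 2) := by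
    have hnum : |2 * a * s - 1| ≤ 3 * a := by
      rcases hs with h | h <;> rw [h, abs_le] <;> constructor <;> nlinarith
    have hden : 16 * a ^ 2 * K ^ 2 ≤ x * y := by nlinarith
    have hxy : (0:ℝ) < x * y := mul_pos hxpos hypos
    rw [abs_div, abs_of_pos hxy, div_le_div_iff₀ hxy (by positivity)]
    calc |2 * a * s - 1| * (16 * a * K ^ 2) ≤ (3 * a) * (16 * a * K ^ 2) := by
          apply mul_le_mul_of_nonneg_right hnum (by positivity)
      _ = 3 * (16 * a ^ 2 * K ^ 2) := by ring
      _ ≤ 3 * (x * y) := by nlinarith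
  have hu12 : |(2 * a * s - 1) / (x * y)| ≤ 1 / 2 := by
    have : 3 / (16 * a * K ^ 2) ≤ 1 / 2 := by
      rw [div_le_div_iff₀ (by positivity) (by norm_num)]; nlinarith
    linarith
  rw [← Real.log_mul hP1.ne' hP2.ne', hprod]
  calc |Real.log (1 + (2 * a * s - 1) / (x * y))| ≤ 2 * |(2 * a * s - 1) / (x * y)| :=
        abs_log_le hu12
    _ ≤ 2 * (3 / (16 * a * K ^ 2)) := by linarith
    _ = 3 / (8 * a * K ^ 2) := by
        rw [eq_div_iff (by positivity)]; field_simp; ring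

lemma pair_bound (q : ℕ) (hq : 1 ≤ q) {k : ℕ} (hk : 1 ≤ k) {j : ℕ} (hj : j < q) :
    |fq q (2 * q * k + j) + fq q (2 * q * k + q + j)| ≤ 3 / (8 * q * (k : ℝ) ^ 2) := by
  have ha : (1:ℝ) ≤ (q:ℝ) := by exact_mod_cast hq
  have hK : (1:ℝ) ≤ (k:ℝ) := by exact_mod_cast hk
  have hJ : (0:ℝ) ≤ (j:ℝ) := Nat.cast_nonneg j
  have e1 : (2 * ((2 * q * k + j : ℕ) : ℝ) + 1) = 4 * (q:ℝ) * (k:ℝ) + 2 * (j:ℝ) + 1 := by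
    push_cast; ring
  have e2 : (2 * ((2 * q * k + q + j : ℕ) : ℝ) + 1)
      = 4 * (q:ℝ) * (k:ℝ) + 2 * (q:ℝ) + 2 * (j:ℝ) + 1 := by
    push_cast; ring
  unfold fq
  rw [st_lo hq hj, st_hi hq hj, e1, e2, neg_div]
  rw [show -(thueMorse k / (4 * (q:ℝ) * (k:ℝ) + 2 * (q:ℝ) + 2 * (j:ℝ) + 1))
      = -thueMorse k / (4 * (q:ℝ) * (k:ℝ) + 2 * (q:ℝ) + 2 * (j:ℝ) + 1) from (neg_div _ _).symm]
  exact pair_core ha hK hJ (tm_pm k)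

noncomputable def Bq (q k : ℕ) : ℝ := ∑ j ∈ range (2 * q), fq q (2 * q * k + j)

lemma B_split (q k : ℕ) :
    Bq q k = ∑ j ∈ range q, (fq q (2 * q * k + j) + fq q (2 * q * k + q + j)) := by
  unfold Bq
  rw [two_mul, Finset.sum_range_add, ← Finset.sum_add_distrib]
  congr 1
  ext j
  congr 2
  omega

lemma B_bound1 (q : ℕ) (hq : 1 ≤ q) {k : ℕ} (hk : 1 ≤ k) :
    |Bq q k| ≤ 1 / (k : ℝ) ^ 2 := by
  have hK : (1:ℝ) ≤ (k:ℝ) := by exact_mod_cast hk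
  have ha : (1:ℝ) ≤ (q:ℝ) := by exact_mod_cast hq
  rw [B_split]
  calc |∑ j ∈ range q, (fq q (2 * q * k + j) + fq q (2 * q * k + q + j))|
      ≤ ∑ j ∈ range q, |fq q (2 * q * k + j) + fq q (2 * q * k + q + j)| :=
        Finset.abs_sum_le_sum_abs _ _
    _ ≤ ∑ _j ∈ range q, 3 / (8 * (q:ℝ) * (k : ℝ) ^ 2) := by
        apply Finset.sum_le_sum
        intro j hj
        exact pair_bound q hq hk (Finset.mem_range.1 hj)
    _ = (q:ℝ) * (3 / (8 * (q:ℝ) * (k : ℝ) ^ 2)) := by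
        rw [Finset.sum_const, Finset.card_range, nsmul_eq_mul]
    _ = 3 / (8 * (k : ℝ) ^ 2) := by field_simp
    _ ≤ 1 / (k : ℝ) ^ 2 := by
        rw [div_le_div_iff₀ (by positivity) (by positivity)]
        nlinarith

lemma B_bound (q : ℕ) (hq : 1 ≤ q) (k : ℕ) :
    |Bq q k| ≤ (2 * (q:ℝ) + 4) / ((k : ℝ) + 1) ^ 2 := by
  have ha : (1:ℝ) ≤ (q:ℝ) := by exact_mod_cast hq
  rcases Nat.eq_zero_or_pos k with rfl | hk
  · unfold Bq
    calc |∑ j ∈ range (2 * q), fq q (2 * q * 0 + j)|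
        ≤ ∑ j ∈ range (2 * q), |fq q (2 * q * 0 + j)| := Finset.abs_sum_le_sum_abs _ _
      _ ≤ ∑ _j ∈ range (2 * q), (1:ℝ) := Finset.sum_le_sum fun j _ => absfq' q _
      _ = 2 * (q:ℝ) := by
          rw [Finset.sum_const, Finset.card_range, nsmul_eq_mul]; push_cast; ring
      _ ≤ (2 * (q:ℝ) + 4) / ((0:ℕ) + 1 : ℝ) ^ 2 := by norm_num
  · have hK : (1:ℝ) ≤ (k:ℝ) := by exact_mod_cast hk
    calc |Bq q k| ≤ 1 / (k : ℝ) ^ 2 := B_bound1 q hq hk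
      _ ≤ (2 * (q:ℝ) + 4) / ((k : ℝ) + 1) ^ 2 := by
          rw [div_le_div_iff₀ (by positivity) (by positivity)]
          nlinarith

lemma B_summable (q : ℕ) (hq : 1 ≤ q) : Summable (Bq q) := by
  have h1 : Summable (fun k : ℕ => (2 * (q:ℝ) + 4) / ((k : ℝ) + 1) ^ 2) := by
    have h2 : Summable (fun k : ℕ => 1 / ((k : ℝ)) ^ 2) :=
      summable_one_div_nat_pow.2 one_lt_two
    have h3 : Summable (fun k : ℕ => 1 / ((k : ℝ) + 1) ^ 2) := by
      refine ((summable_nat_add_iff 1).2 h2).congr fun k => ?_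
      push_cast
      ring
    refine (h3.mul_left (2 * (q:ℝ) + 4)).congr fun k => ?_
    rw [mul_one_div]
  exact Summable.of_norm_bounded h1 fun k => by
    rw [Real.norm_eq_abs]; exact B_bound q hq k

lemma conv (q : ℕ) (hq : 1 ≤ q) : ∃ I : ℝ, 0 < I ∧
    Tendsto (fun N => ∏ n ∈ range N, (1 + stutter q n / (2 * n + 1))) atTop (nhds I) := by
  have hblock : ∀ K, ∑ n ∈ range (2 * q * K), fq q n = ∑ k ∈ range K, Bq q k := by
    intro K; induction K with
    | zero => simp
    | succ K ih =>
      rw [Finset.sum_range_succ, ← ih, show 2*q*(K+1) = 2*q*K + 2*q by ring,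
        Finset.sum_range_add]
      rfl
  set L := ∑' k, Bq q k with hL
  have hLt : Tendsto (fun K => ∑ k ∈ range K, Bq q k) atTop (nhds L) :=
    (B_summable q hq).hasSum.tendsto_sum_nat
  have hdiv : Tendsto (fun N : ℕ => N / (2 * q)) atTop atTop := by
    apply tendsto_atTop_atTop.2
    intro b
    refine ⟨2 * q * b, fun n hn => ?_⟩
    rw [Nat.le_div_iff_mul_le (by omega : 0 < 2 * q)]
    rwa [mul_comm] at hn
  have hg : Tendsto (fun N : ℕ => ∑ k ∈ range (N / (2*q)), Bq q k) atTop (nhds L) :=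
    hLt.comp hdiv
  have hsplit : ∀ N : ℕ, ∑ n ∈ range N, fq q n
      = (∑ k ∈ range (N / (2*q)), Bq q k) + ∑ n ∈ Finset.Ico (2*q*(N/(2*q))) N, fq q n := by
    intro N
    have hm : 2*q*(N/(2*q)) ≤ N := by
      rw [mul_comm]; exact Nat.div_mul_le_self N (2*q)
    rw [← hblock, Finset.range_eq_Ico, Finset.range_eq_Ico]
    exact (Finset.sum_Ico_consecutive (fq q) (Nat.zero_le _) hm).symm
  have hr : Tendsto (fun N : ℕ => ∑ n ∈ Finset.Ico (2*q*(N/(2*q))) N, fq q n)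
      atTop (nhds 0) := by
    apply squeeze_zero_norm' (a := fun N : ℕ => 2*(q:ℝ) * (1/((N:ℝ) - 2*q + 1)))
    · filter_upwards [eventually_ge_atTop (2*q)] with N hN
      have hmod : N % (2*q) < 2*q := Nat.mod_lt _ (by omega)
      have hdm : 2*q*(N/(2*q)) + N % (2*q) = N := Nat.div_add_mod N (2*q)
      have hD : (0:ℝ) < (N:ℝ) - 2*q + 1 := by
        have : (2*q:ℕ) ≤ N := hN
        have : ((2*q:ℕ):ℝ) ≤ (N:ℝ) := by exact_mod_cast this
        push_cast at this ⊢
        linarith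
      have hterm : ∀ n ∈ Finset.Ico (2*q*(N/(2*q))) N, ‖fq q n‖ ≤ 1/((N:ℝ) - 2*q + 1) := by
        intro n hn
        rw [Finset.mem_Ico] at hn
        have hn1 : 1 ≤ n := by omega
        have hncast : (N:ℝ) - 2*q + 1 ≤ (n:ℝ) := by
          have : N + 1 ≤ n + 2*q := by omega
          have : ((N:ℝ)) + 1 ≤ (n:ℝ) + 2*q := by exact_mod_cast this
          linarith
        have hnpos : (0:ℝ) < (n:ℝ) := by exact_mod_cast hn1
        rw [Real.norm_eq_abs]
        calc |fq q n| ≤ 2 / (2 * (n:ℝ) + 1) := absfq q hn1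
          _ ≤ 1 / (n:ℝ) := by
              rw [div_le_div_iff₀ (by linarith) hnpos]; linarith
          _ ≤ 1/((N:ℝ) - 2*q + 1) := by
              apply div_le_div_of_nonneg_left (by norm_num) hD hncast
      calc ‖∑ n ∈ Finset.Ico (2*q*(N/(2*q))) N, fq q n‖
          ≤ ∑ n ∈ Finset.Ico (2*q*(N/(2*q))) N, ‖fq q n‖ := norm_sum_le _ _
        _ ≤ (Finset.Ico (2*q*(N/(2*q))) N).card • (1/((N:ℝ) - 2*q + 1)) :=
            Finset.sum_le_card_nsmul _ _ _ hterm
        _ ≤ 2*(q:ℝ) * (1/((N:ℝ) - 2*q + 1)) := by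
            rw [nsmul_eq_mul]
            apply mul_le_mul_of_nonneg_right _ (by positivity)
            rw [Nat.card_Ico]
            have hcard : N - 2*q*(N/(2*q)) ≤ 2*q := by omega
            have : ((N - 2*q*(N/(2*q)) : ℕ) : ℝ) ≤ ((2*q : ℕ) : ℝ) := by
              exact_mod_cast hcard
            push_cast at this ⊢
            linarith
    · have hD' : Tendsto (fun N : ℕ => (N:ℝ) - 2*q + 1) atTop atTop := by
        have t : Tendsto (fun N : ℕ => ((N:ℝ) + -(2*(q:ℝ))) + 1) atTop atTop :=
          tendsto_atTop_add_const_right atTop 1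
            (tendsto_atTop_add_const_right atTop (-(2*(q:ℝ)))
              (tendsto_natCast_atTop_atTop (R := ℝ)))
        exact t.congr fun N => by ring
      have h2 := hD'.inv_tendsto_atTop.const_mul (2*(q:ℝ))
      simp only [mul_zero] at h2
      refine h2.congr fun N => ?_
      simp only [Pi.inv_apply, one_div]
  have hS : Tendsto (fun N => ∑ n ∈ range N, fq q n) atTop (nhds (L + 0)) := by
    simp only [hsplit]
    exact hg.add hr
  rw [add_zero] at hS
  refine ⟨Real.exp L, Real.exp_pos L, ?_⟩
  have hpe : ∀ N, ∏ n ∈ range N, (1 + stutter q n / (2 * (n:ℝ) + 1))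
      = Real.exp (∑ n ∈ range N, fq q n) := by
    intro N
    rw [Real.exp_sum]
    exact Finset.prod_congr rfl fun n _ => (Real.exp_log (Fpos q n)).symm
  simp only [hpe]
  exact (Real.continuous_exp.continuousAt.tendsto).comp hS

noncomputable def Wp (N : ℕ) : ℝ :=
  ∏ m ∈ range N, ((4 * (m:ℝ) + 2) ^ 2 / ((4 * m + 1) * (4 * m + 3)))

lemma Wp_eq_gamma {n : ℕ} (hn : 1 ≤ n) :
    Wp (n + 1) = Real.GammaSeq (1/4) n * Real.GammaSeq (3/4) n / (Real.GammaSeq (1/2) n) ^ 2 := by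
  have hn' : (0:ℝ) < (n:ℝ) := by exact_mod_cast hn
  have hA : (0:ℝ) < ∏ j ∈ range (n+1), (1/4 + (j:ℝ)) :=
    Finset.prod_pos fun j _ => by positivity
  have hB : (0:ℝ) < ∏ j ∈ range (n+1), (3/4 + (j:ℝ)) :=
    Finset.prod_pos fun j _ => by positivity
  have hC : (0:ℝ) < ∏ j ∈ range (n+1), (1/2 + (j:ℝ)) :=
    Finset.prod_pos fun j _ => by positivity
  have hfac : (0:ℝ) < (n.factorial : ℝ) := by exact_mod_cast n.factorial_pos
  have hr1 : (n:ℝ) ^ ((1:ℝ)/4) * (n:ℝ) ^ ((3:ℝ)/4) = (n:ℝ) := by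
    rw [← Real.rpow_add hn']
    norm_num
  have hr2 : ((n:ℝ) ^ ((1:ℝ)/2)) ^ 2 = (n:ℝ) := by
    rw [sq, ← Real.rpow_add hn']
    norm_num
  have hW : Wp (n + 1) = (∏ j ∈ range (n+1), (1/2 + (j:ℝ))) ^ 2 /
      ((∏ j ∈ range (n+1), (1/4 + (j:ℝ))) * (∏ j ∈ range (n+1), (3/4 + (j:ℝ)))) := by
    rw [← Finset.prod_pow, ← Finset.prod_mul_distrib, ← Finset.prod_div_distrib]
    apply Finset.prod_congr rfl
    intro m _
    have h1 : (0:ℝ) < 1/4 + (m:ℝ) := by positivity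
    have h3 : (0:ℝ) < 3/4 + (m:ℝ) := by positivity
    field_simp
    ring
  rw [hW]
  unfold Real.GammaSeq
  obtain ⟨A, hA'⟩ : ∃ A : ℝ, A = ∏ j ∈ range (n+1), (1/4 + (j:ℝ)) := ⟨_, rfl⟩
  obtain ⟨B, hB'⟩ : ∃ B : ℝ, B = ∏ j ∈ range (n+1), (3/4 + (j:ℝ)) := ⟨_, rfl⟩
  obtain ⟨C, hC'⟩ : ∃ C : ℝ, C = ∏ j ∈ range (n+1), (1/2 + (j:ℝ)) := ⟨_, rfl⟩
  obtain ⟨F, hF'⟩ : ∃ F : ℝ, F = (n.factorial : ℝ) := ⟨_, rfl⟩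
  obtain ⟨t1, ht1⟩ : ∃ t : ℝ, t = (n:ℝ) ^ ((1:ℝ)/4) := ⟨_, rfl⟩
  obtain ⟨t2, ht2⟩ : ∃ t : ℝ, t = (n:ℝ) ^ ((1:ℝ)/2) := ⟨_, rfl⟩
  obtain ⟨t3, ht3⟩ : ∃ t : ℝ, t = (n:ℝ) ^ ((3:ℝ)/4) := ⟨_, rfl⟩
  have hAp : 0 < A := hA' ▸ hA
  have hBp : 0 < B := hB' ▸ hB
  have hCp : 0 < C := hC' ▸ hC
  have hFp : 0 < F := hF' ▸ hfac
  have ht2p : 0 < t2 := ht2 ▸ Real.rpow_pos_of_pos hn' _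
  have h13 : t1 * t3 = t2 ^ 2 := by rw [ht1, ht2, ht3, hr1, hr2]
  have hcong : ∀ x y : ℝ, x = 1/4 + (y:ℝ) → True := fun _ _ _ => trivial
  have e1 : ∏ j ∈ range (n+1), ((1:ℝ)/4 + (j:ℝ)) = A := hA'.symm
  have e2 : ∏ j ∈ range (n+1), ((3:ℝ)/4 + (j:ℝ)) = B := hB'.symm
  have e3 : ∏ j ∈ range (n+1), ((1:ℝ)/2 + (j:ℝ)) = C := hC'.symm
  rw [e1, e2, e3, ← hF', ← ht1, ← ht2, ← ht3]
  rw [div_mul_div_comm, div_pow]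
  rw [div_div_div_eq]
  have hkey : t1 * F * (t3 * F) * C ^ 2 = C ^ 2 * ((t2 * F) ^ 2) * (t1 * t3) / t2 ^ 2 := by
    rw [eq_div_iff (by positivity)]
    ring
  rw [hkey, h13]
  field_simp

lemma Wp_tendsto : Tendsto Wp atTop (nhds (Real.sqrt 2)) := by
  have hs2 : Real.sqrt 2 * Real.sqrt 2 = 2 := Real.mul_self_sqrt (by norm_num)
  have hs2p : (0:ℝ) < Real.sqrt 2 := Real.sqrt_pos.2 (by norm_num)
  have hval : Real.Gamma (1/4) * Real.Gamma (3/4) / (Real.Gamma (1/2)) ^ 2 = Real.sqrt 2 := by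
    have h1 : Real.Gamma (1/4) * Real.Gamma (1 - 1/4) = π / Real.sin (π * (1/4)) :=
      Real.Gamma_mul_Gamma_one_sub (1/4)
    have h2 : Real.sin (π * (1/4)) = Real.sqrt 2 / 2 := by
      rw [show π * (1/4) = π / 4 by ring, Real.sin_pi_div_four]
    have h5 : (1:ℝ) - 1/4 = 3/4 := by norm_num
    rw [h5, h2] at h1
    rw [h1, Real.Gamma_one_half_eq, Real.sq_sqrt Real.pi_pos.le]
    rw [div_div_eq_mul_div, div_div]
    rw [div_eq_iff (by positivity : Real.sqrt 2 * π ≠ 0)]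
    linear_combination (-π) * hs2
  have hG : Tendsto (fun n => Real.GammaSeq (1/4) n * Real.GammaSeq (3/4) n /
      (Real.GammaSeq (1/2) n) ^ 2) atTop
      (nhds (Real.Gamma (1/4) * Real.Gamma (3/4) / (Real.Gamma (1/2)) ^ 2)) := by
    apply Tendsto.div
    · exact (Real.GammaSeq_tendsto_Gamma _).mul (Real.GammaSeq_tendsto_Gamma _)
    · exact (Real.GammaSeq_tendsto_Gamma _).pow 2
    · rw [Real.Gamma_one_half_eq]
      positivity
  rw [hval] at hG
  have hshift : Tendsto (fun n => Wp (n + 1)) atTop (nhds (Real.sqrt 2)) := by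
    apply hG.congr'
    filter_upwards [eventually_ge_atTop 1] with n hn
    exact (Wp_eq_gamma hn).symm
  exact (tendsto_add_atTop_iff_nat 1).1 hshift

lemma st_double_even (q N : ℕ) (hq : 1 ≤ q) : stutter (2 * q) (2 * N) = stutter q N := by
  unfold stutter
  rw [Nat.mul_div_mul_left _ _ (by norm_num : 0 < 2)]

lemma st_double_odd (q N : ℕ) (hq : 1 ≤ q) : stutter (2 * q) (2 * N + 1) = stutter q N := by
  unfold stutter
  rw [← Nat.div_div_eq_div_mul]
  congr 2
  omega

lemma even_prod (q : ℕ) (hq : 1 ≤ q) (N : ℕ) :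
    ∏ n ∈ range (2 * N), (1 + stutter (2 * q) n / (2 * n + 1))
      = (∏ n ∈ range N, (1 + stutter q n / (2 * n + 1))) * Wp N := by
  induction N with
  | zero => simp [Wp]
  | succ N ih =>
    have hWs : Wp (N+1) = Wp N * ((4*(N:ℝ)+2)^2/((4*(N:ℝ)+1)*(4*(N:ℝ)+3))) := by
      unfold Wp; rw [Finset.prod_range_succ]
    rw [show 2 * (N + 1) = 2 * N + 1 + 1 by ring, Finset.prod_range_succ,
      Finset.prod_range_succ, ih, Finset.prod_range_succ, hWs]
    have hb := st_pm q N
    rw [st_double_odd q N hq, st_double_even q N hq]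
    have e1 : (2 * ((2 * N : ℕ) : ℝ) + 1) = 4 * (N:ℝ) + 1 := by push_cast; ring
    have e2 : (2 * ((2 * N + 1 : ℕ) : ℝ) + 1) = 4 * (N:ℝ) + 3 := by push_cast; ring
    rw [e1, e2]
    have h1 : (0:ℝ) < 4 * (N:ℝ) + 1 := by positivity
    have h3 : (0:ℝ) < 4 * (N:ℝ) + 3 := by positivity
    have h2 : (0:ℝ) < 2 * (N:ℝ) + 1 := by positivity
    rcases hb with h | h <;> rw [h] <;> field_simp <;> ring

theorem stuttered_product_ratio (q : ℕ) (hq : 1 ≤ q) :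
    ∃ I1 I2 : ℝ, I1 ≠ 0 ∧ I2 ≠ 0 ∧
      Filter.Tendsto
        (fun N => ∏ n ∈ Finset.range N, (1 + stutter q n / (2 * n + 1)))
        Filter.atTop (nhds I1) ∧
      Filter.Tendsto
        (fun N => ∏ n ∈ Finset.range N, (1 + stutter (2 * q) n / (2 * n + 1)))
        Filter.atTop (nhds I2) ∧
      I2 / I1 = Real.sqrt 2 := by
  obtain ⟨I1, hI1pos, hP⟩ := conv q hq
  obtain ⟨I2, hI2pos, hQ⟩ := conv (2 * q) (by omega)
  refine ⟨I1, I2, hI1pos.ne', hI2pos.ne', hP, hQ, ?_⟩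
  have hdouble : Tendsto (fun N : ℕ => 2 * N) atTop atTop :=
    tendsto_atTop_atTop.2 fun b => ⟨b, fun n hn => by omega⟩
  have hQ2 : Tendsto (fun N : ℕ => ∏ n ∈ range (2 * N),
      (1 + stutter (2 * q) n / (2 * n + 1))) atTop (nhds I2) := hQ.comp hdouble
  have hPW : Tendsto (fun N : ℕ => (∏ n ∈ range N,
      (1 + stutter q n / (2 * n + 1))) * Wp N) atTop (nhds (I1 * Real.sqrt 2)) :=
    hP.mul Wp_tendsto
  have hEq : I2 = I1 * Real.sqrt 2 :=
    tendsto_nhds_unique (hQ2.congr (even_prod q hq)) hPW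
  rw [hEq, mul_comm, mul_div_assoc, div_self hI1pos.ne', mul_one]
end
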